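/- Let μ be a compactly supported Borel probability measure on ℝ and Γ ⊂ ℝ countable. The family {e_γ : γ ∈ Γ} is an orthonormal basis of L²(μ) if and only if the spectral function c_Γ(t) = ∑_{γ∈Γ} |μ̂(γ+t)|² is identically 1 on ℝ. -/

import Mathlib

open MeasureTheory Real ENNReal


open MeasureTheory Real ENNReal Complex

noncomputable section

def Fc (t : ℝ) : ℝ → ℂ := fun x => Complex.exp (2 * π * Complex.I * t * x)

lemma Fc_cont (t : ℝ) : Continuous (Fc t) := by
  unfold Fc; fun_prop

lemma Fc_norm (t x : ℝ) : ‖Fc t x‖ = 1 := by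
  unfold Fc
  rw [Complex.norm_exp]
  norm_num [Complex.mul_re, Complex.mul_im]

lemma Fc_conj (s x : ℝ) : (starRingEnd ℂ) (Fc s x) = Fc (-s) x := by
  unfold Fc
  rw [← Complex.exp_conj]
  congr 1
  simp only [map_mul, Complex.conj_I, Complex.conj_ofReal, map_ofNat]
  push_cast
  ring

lemma Fc_mul (s t x : ℝ) : Fc s x * Fc t x = Fc (s + t) x := by
  unfold Fc
  rw [← Complex.exp_add]
  congr 1
  push_cast
  ring

lemma Fc_zero : Fc 0 = fun _ => 1 := by
  funext x; unfold Fc; simp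

lemma Fc_memLp (μ : Measure ℝ) [IsFiniteMeasure μ] (t : ℝ) : MemLp (Fc t) 2 μ :=
  MemLp.of_bound (Fc_cont t).aestronglyMeasurable 1 (Filter.Eventually.of_forall fun x => le_of_eq (Fc_norm t x))

def fLp (μ : Measure ℝ) [IsFiniteMeasure μ] (t : ℝ) : Lp ℂ 2 μ := (Fc_memLp μ t).toLp _

lemma fLp_coe (μ : Measure ℝ) [IsFiniteMeasure μ] (t : ℝ) : (fLp μ t : ℝ → ℂ) =ᵐ[μ] Fc t :=
  MemLp.coeFn_toLp _

lemma Fc_integrable (μ : Measure ℝ) [IsFiniteMeasure μ] (t : ℝ) : Integrable (Fc t) μ :=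
  (Fc_memLp μ t).integrable one_le_two

end
noncomputable section
open scoped InnerProductSpace ComplexConjugate

variable {μ : Measure ℝ} [IsProbabilityMeasure μ]

lemma inner_eq_int (g h : Lp ℂ 2 μ) (s t : ℝ) (hg : (g : ℝ → ℂ) =ᵐ[μ] Fc s)
    (hh : (h : ℝ → ℂ) =ᵐ[μ] Fc t) :
    (⟪g, h⟫_ℂ : ℂ) = ∫ x, Fc (t - s) x ∂μ := by
  rw [MeasureTheory.L2.inner_def]
  refine integral_congr_ae ?_
  filter_upwards [hg, hh] with x hx hx'
  rw [RCLike.inner_apply, hx, hx', Fc_conj, Fc_mul]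
  ring_nf

lemma int_Fc_zero : ∫ x, Fc 0 x ∂μ = 1 := by
  rw [Fc_zero]
  simp

lemma norm_int_Fc_neg (t : ℝ) : ‖∫ x, Fc (-t) x ∂μ‖ = ‖∫ x, Fc t x ∂μ‖ := by
  have : ∫ x, Fc (-t) x ∂μ = conj (∫ x, Fc t x ∂μ) := by
    rw [← integral_conj]
    exact integral_congr_ae (Filter.Eventually.of_forall fun x => (Fc_conj t x).symm)
  rw [this, RCLike.norm_conj]

lemma norm_eq_one (g : Lp ℂ 2 μ) (s : ℝ) (hg : (g : ℝ → ℂ) =ᵐ[μ] Fc s) : ‖g‖ = 1 := by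
  have h2 : ‖g‖ ^ 2 = 1 := by
    have := norm_sq_eq_re_inner (𝕜 := ℂ) g
    rw [this, inner_eq_int g g s s hg hg, sub_self, int_Fc_zero]
    simp
  nlinarith [norm_nonneg g]

end
section Bessel
open scoped InnerProductSpace ComplexConjugate
open RCLike Finset
variable {E : Type*} [NormedAddCommGroup E] [InnerProductSpace ℂ E]
variable {ι : Type*} {v : ι → E}

lemma bessel_sub (hv : Orthonormal ℂ v) (s : Finset ι) (x : E) :
    ‖x - ∑ i ∈ s, ⟪v i, x⟫_ℂ • v i‖ ^ 2 = ‖x‖ ^ 2 - ∑ i ∈ s, ‖⟪v i, x⟫_ℂ‖ ^ 2 := by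
  have h₂ :
    (∑ i ∈ s, ∑ j ∈ s, ⟪v i, x⟫_ℂ * ⟪x, v j⟫_ℂ * ⟪v j, v i⟫_ℂ) = (∑ k ∈ s, ⟪v k, x⟫_ℂ * ⟪x, v k⟫_ℂ : ℂ) := by
    classical exact hv.inner_left_right_finset
  have h₃ : ∀ z : ℂ, RCLike.re (z * conj z) = ‖z‖ ^ 2 := by
    intro z
    rw [RCLike.mul_conj]
    norm_cast
  rw [@norm_sub_sq ℂ, sub_add]
  simp only [@InnerProductSpace.norm_sq_eq_re_inner ℂ, inner_sum, sum_inner]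
  simp only [inner_smul_right, two_mul, inner_smul_left, inner_conj_symm, ← mul_assoc, h₂,
    add_sub_cancel_right, _root_.sub_right_inj]
  simp only [map_sum, ← inner_conj_symm x, ← h₃]
  simp [RCLike.inner_apply, mul_comm]
  rw [← Finset.sum_sub_distrib]
  refine Finset.sum_congr rfl fun i _ => ?_
  rw [← inner_conj_symm x (v i), ← Complex.ofReal_pow, Complex.ofReal_re, Complex.sq_norm,
    Complex.normSq_apply, Complex.conj_re, Complex.conj_im]
  ring

lemma mem_closure_span_of_tsum_eq (hv : Orthonormal ℂ v) (x : E)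
    (h : ∑' i, ‖⟪v i, x⟫_ℂ‖ ^ 2 = ‖x‖ ^ 2) :
    x ∈ (Submodule.span ℂ (Set.range v)).topologicalClosure := by
  have hsummable : Summable fun i => ‖⟪v i, x⟫_ℂ‖ ^ 2 := hv.inner_products_summable x
  have hS : HasSum (fun i => ‖⟪v i, x⟫_ℂ‖ ^ 2) (‖x‖ ^ 2) := h ▸ hsummable.hasSum
  have : x ∈ closure (Submodule.span ℂ (Set.range v) : Set E) := by
    rw [Metric.mem_closure_iff]
    intro ε hε
    obtain ⟨s, hs⟩ : ∃ s : Finset ι, ‖x‖ ^ 2 - ε ^ 2 < ∑ i ∈ s, ‖⟪v i, x⟫_ℂ‖ ^ 2 :=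
      (hS.eventually (eventually_gt_nhds (by nlinarith))).exists
    refine ⟨∑ i ∈ s, ⟪v i, x⟫_ℂ • v i, ?_, ?_⟩
    · exact Submodule.sum_mem _ fun i _ => Submodule.smul_mem _ _
        (Submodule.subset_span (Set.mem_range_self i))
    · rw [dist_eq_norm]
      have hb := bessel_sub hv s x
      nlinarith [norm_nonneg (x - ∑ i ∈ s, ⟪v i, x⟫_ℂ • v i)]
  exact this

end Bessel
noncomputable section Density
open scoped InnerProductSpace ComplexConjugate

def FcCM (t : ℝ) : C(ℝ, ℂ) := ⟨Fc t, Fc_cont t⟩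

lemma Fc_eq_imp {t a b : ℝ} (h : Fc t a = Fc t b) : ∃ n : ℤ, t * a = t * b + n := by
  unfold Fc at h
  rw [Complex.exp_eq_exp_iff_exists_int] at h
  obtain ⟨n, hn⟩ := h
  refine ⟨n, ?_⟩
  have h2 : (2 * (π : ℂ) * Complex.I) * (((t * a : ℝ) : ℂ) - ((t * b : ℝ) : ℂ) - (n : ℂ)) = 0 := by
    push_cast
    push_cast at hn
    linear_combination hn
  have hI : (2 * (π : ℂ) * Complex.I) ≠ 0 := by
    simp [Complex.I_ne_zero, Real.pi_ne_zero, Complex.ofReal_ne_zero]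
  have h3 : ((t * a - t * b - n : ℝ) : ℂ) = 0 := by
    have := (mul_eq_zero.mp h2).resolve_left hI
    push_cast
    push_cast at this
    linear_combination this
  have h4 : (t * a - t * b - n : ℝ) = 0 := by exact_mod_cast h3
  linarith

variable (μ : Measure ℝ) [IsProbabilityMeasure μ]

set_option maxHeartbeats 1000000 in
lemma dense_fLp (hK : ∃ K : Set ℝ, IsCompact K ∧ μ Kᶜ = 0) :
    (Submodule.span ℂ (Set.range (fLp μ))).topologicalClosure = ⊤ := by
  obtain ⟨K, hKc, hKm⟩ := hK
  haveI : CompactSpace ↥K := isCompact_iff_compactSpace.mp hKc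
  set ρ : C(ℝ, ℂ) →ₐ[ℂ] C(↥K, ℂ) :=
    ContinuousMap.compRightAlgHom ℂ ℂ ⟨Subtype.val, continuous_subtype_val⟩ with hρ
  set M : Set C(↥K, ℂ) := Set.range (fun t : ℝ => ρ (FcCM t)) with hM
  -- multiplication and one
  have hFmul : ∀ s t : ℝ, ρ (FcCM s) * ρ (FcCM t) = ρ (FcCM (s + t)) := by
    intro s t
    rw [← map_mul]
    congr 1
    ext x
    exact Fc_mul s t x
  have hFone : ρ (FcCM 0) = 1 := by
    ext x
    show Fc 0 x = 1
    rw [Fc_zero]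
  set P : Submodule ℂ C(↥K, ℂ) := Submodule.span ℂ M with hP
  have h1P : (1 : C(↥K, ℂ)) ∈ P := by
    rw [← hFone]
    exact Submodule.subset_span ⟨0, rfl⟩
  have hmulP : ∀ x y : C(↥K, ℂ), x ∈ P → y ∈ P → x * y ∈ P := by
    intro x y hx hy
    have : x * y ∈ P * P := Submodule.mul_mem_mul hx hy
    rw [hP, Submodule.span_mul_span] at this
    refine Submodule.span_le.mpr ?_ this
    rintro _ ⟨a, ⟨s, rfl⟩, b, ⟨t, rfl⟩, rfl⟩
    exact Submodule.subset_span ⟨s + t, (hFmul s t).symm⟩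
  have hstarP : ∀ x ∈ P, star x ∈ P := by
    intro x hx
    induction hx using Submodule.span_induction with
    | mem g hg =>
      obtain ⟨t, rfl⟩ := hg
      refine Submodule.subset_span ⟨-t, ?_⟩
      ext z
      show Fc (-t) z = star (Fc t z)
      exact (Fc_conj t z).symm
    | zero => simpa using P.zero_mem
    | add a b _ _ ha hb => rw [star_add]; exact P.add_mem ha hb
    | smul c a _ ha => rw [star_smul]; exact P.smul_mem _ ha
  set A : StarSubalgebra ℂ C(↥K, ℂ) :=
    { P.toSubalgebra h1P hmulP with star_mem' := fun {a} ha => hstarP a ha } with hA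
  have hsep : A.toSubalgebra.SeparatesPoints := by
    rintro x y hxy
    have hab : (x : ℝ) ≠ (y : ℝ) := fun h => hxy (Subtype.ext h)
    set t : ℝ := 1 / (2 * ((x : ℝ) - (y : ℝ))) with ht
    refine ⟨_, ⟨ρ (FcCM t), Submodule.subset_span ⟨t, rfl⟩, rfl⟩, ?_⟩
    show Fc t (x : ℝ) ≠ Fc t (y : ℝ)
    intro hEq
    obtain ⟨n, hn⟩ := Fc_eq_imp hEq
    have hd : ((x : ℝ) - (y : ℝ)) ≠ 0 := sub_ne_zero.mpr hab
    have hkey : t * ((x : ℝ) - (y : ℝ)) = n := by linarith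
    rw [ht] at hkey
    field_simp at hkey
    have hz : (2 * (n : ℝ) - 1) * ((x : ℝ) - (y : ℝ)) = 0 := by
      linear_combination (-((x : ℝ) - (y : ℝ))) * hkey
    have h2n : (2 * (n : ℝ) - 1) = 0 := (mul_eq_zero.mp hz).resolve_right hd
    have : (2 * n : ℤ) = 1 := by exact_mod_cast (by linarith : (2 * (n:ℝ)) = 1)
    omega
  have hSW := ContinuousMap.starSubalgebra_topologicalClosure_eq_top_of_separatesPoints A hsep
  -- every element of C(K, ℂ) is in the closure of P
  have hPdense : ∀ φ : C(↥K, ℂ), φ ∈ closure (P : Set C(↥K, ℂ)) := by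
    intro φ
    have : φ ∈ A.topologicalClosure := by rw [hSW]; trivial
    exact this
  -- transfer span along ρ, a.e. representatives
  have hexists_ae : ∀ G ∈ Submodule.span ℂ (Set.range FcCM),
      ∃ u ∈ Submodule.span ℂ (Set.range (fLp μ)), (u : ℝ → ℂ) =ᵐ[μ] ⇑G := by
    intro G hG
    induction hG using Submodule.span_induction with
    | mem g hg =>
      obtain ⟨t, rfl⟩ := hg
      exact ⟨fLp μ t, Submodule.subset_span ⟨t, rfl⟩, fLp_coe μ t⟩
    | zero =>
      refine ⟨0, Submodule.zero_mem _, ?_⟩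
      filter_upwards [MeasureTheory.Lp.coeFn_zero ℂ 2 μ] with x hx
      simp [hx]
    | add a b _ _ ha hb =>
      obtain ⟨u, hu, hu'⟩ := ha
      obtain ⟨v, hv, hv'⟩ := hb
      refine ⟨u + v, Submodule.add_mem _ hu hv, (MeasureTheory.Lp.coeFn_add u v).trans ?_⟩
      filter_upwards [hu', hv'] with x h2 h3
      simp only [Pi.add_apply, ContinuousMap.coe_add, h2, h3]
    | smul c a _ ha =>
      obtain ⟨u, hu, hu'⟩ := ha
      refine ⟨c • u, Submodule.smul_mem _ _ hu, (MeasureTheory.Lp.coeFn_smul c u).trans ?_⟩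
      filter_upwards [hu'] with x h2
      simp only [Pi.smul_apply, ContinuousMap.coe_smul, h2]
  have hμ1 : (measureUnivNNReal μ : ℝ) = 1 := by
    simp [measureUnivNNReal, measure_univ]
  rw [eq_top_iff]
  have hclosed : IsClosed ((Submodule.span ℂ (Set.range (fLp μ))).topologicalClosure
      : Set (Lp ℂ 2 μ)) := Submodule.isClosed_topologicalClosure _
  intro h _
  have hBCF : DenseRange
      (BoundedContinuousFunction.toLp (E := ℂ) 2 μ ℂ : (BoundedContinuousFunction ℝ ℂ) →L[ℂ] Lp ℂ 2 μ) :=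
    BoundedContinuousFunction.toLp_denseRange (E := ℂ) (μ := μ) ℂ (by norm_num)
  have hmem : h ∈ closure (Set.range
      (BoundedContinuousFunction.toLp (E := ℂ) 2 μ ℂ : (BoundedContinuousFunction ℝ ℂ) →L[ℂ] Lp ℂ 2 μ)) := by
    rw [hBCF.closure_range]; trivial
  refine closure_minimal ?_ hclosed hmem
  rintro _ ⟨b, rfl⟩
  show (BoundedContinuousFunction.toLp (E := ℂ) 2 μ ℂ) b ∈
    closure ((Submodule.span ℂ (Set.range (fLp μ))) : Set (Lp ℂ 2 μ))
  rw [Metric.mem_closure_iff]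
  intro ε hε
  set b' : C(↥K, ℂ) := ρ b.toContinuousMap with hb'
  obtain ⟨g, hgP, hgd⟩ := Metric.mem_closure_iff.mp (hPdense b') ε hε
  have hgmap : g ∈ Submodule.map ρ.toLinearMap (Submodule.span ℂ (Set.range FcCM)) := by
    rw [Submodule.map_span]
    have : ⇑ρ.toLinearMap '' Set.range FcCM = M := by
      rw [hM, ← Set.range_comp]
      rfl
    rwa [this]
  obtain ⟨G, hG, rfl⟩ := hgmap
  obtain ⟨u, hu, hu'⟩ := hexists_ae G hG
  refine ⟨u, hu, ?_⟩
  rw [dist_eq_norm]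
  have hbound : ∀ᵐ x ∂μ, ‖((BoundedContinuousFunction.toLp (E := ℂ) 2 μ ℂ) b - u : Lp ℂ 2 μ) x‖
      ≤ dist b' (ρ.toLinearMap G) := by
    filter_upwards [MeasureTheory.Lp.coeFn_sub ((BoundedContinuousFunction.toLp (E := ℂ) 2 μ ℂ) b) u,
      BoundedContinuousFunction.coeFn_toLp 2 μ ℂ b, hu', mem_ae_iff.mpr hKm] with x h1 h2 h3 hx
    rw [h1]
    simp only [Pi.sub_apply, h2, h3]
    have hxK : x ∈ K := by simpa using hx
    have := ContinuousMap.dist_apply_le_dist (f := b') (g := ρ.toLinearMap G) ⟨x, hxK⟩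
    rw [dist_eq_norm] at this
    exact this
  have hnorm := MeasureTheory.Lp.norm_le_of_ae_bound (f := ((BoundedContinuousFunction.toLp (E := ℂ) 2 μ ℂ) b - u : Lp ℂ 2 μ)) dist_nonneg hbound
  rw [hμ1, Real.one_rpow] at hnorm
  calc ‖((BoundedContinuousFunction.toLp (E := ℂ) 2 μ ℂ) b - u : Lp ℂ 2 μ)‖
      ≤ 1 * dist b' (ρ.toLinearMap G) := hnorm
    _ = dist b' (ρ.toLinearMap G) := one_mul _
    _ < ε := hgd
section Main
open scoped InnerProductSpace ComplexConjugate

theorem stmt5 (μ : Measure ℝ) [IsProbabilityMeasure μ]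
    (hK : ∃ K : Set ℝ, IsCompact K ∧ μ Kᶜ = 0)
    (S : Set ℝ) (hS : S.Countable)
    (e : S → Lp ℂ 2 μ)
    (he : ∀ γ : S, (e γ : ℝ → ℂ) =ᵐ[μ] fun x => Complex.exp (2 * π * Complex.I * (γ : ℝ) * x)) :
    (Orthonormal ℂ e ∧ (Submodule.span ℂ (Set.range e)).topologicalClosure = ⊤) ↔
      ∀ t : ℝ, ∑' γ : S, ‖∫ x, Complex.exp (2 * π * Complex.I * ((γ : ℝ) + t) * x) ∂μ‖ ^ 2 = 1 := by
  classical
  have he' : ∀ γ : S, (e γ : ℝ → ℂ) =ᵐ[μ] Fc (γ : ℝ) := he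
  have hterm : ∀ (γ : S) (t : ℝ),
      (∫ x, Complex.exp (2 * π * Complex.I * ((γ : ℝ) + t) * x) ∂μ)
        = ∫ x, Fc ((γ : ℝ) + t) x ∂μ := by
    intro γ t
    refine integral_congr_ae (Filter.Eventually.of_forall fun x => ?_)
    unfold Fc
    norm_num
  have key : ∀ (γ : S) (t : ℝ), ‖⟪e γ, fLp μ (-t)⟫_ℂ‖
      = ‖∫ x, Complex.exp (2 * π * Complex.I * ((γ : ℝ) + t) * x) ∂μ‖ := by
    intro γ t
    rw [inner_eq_int (e γ) (fLp μ (-t)) (γ : ℝ) (-t) (he' γ) (fLp_coe μ (-t)), hterm γ t]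
    have h1 : (-t - (γ : ℝ)) = -((γ : ℝ) + t) := by ring
    rw [h1, norm_int_Fc_neg]
  have hinner_ee : ∀ γ₀ γ₁ : S, ⟪e γ₀, e γ₁⟫_ℂ = ∫ x, Fc ((γ₁ : ℝ) - (γ₀ : ℝ)) x ∂μ :=
    fun γ₀ γ₁ => inner_eq_int (e γ₀) (e γ₁) _ _ (he' γ₀) (he' γ₁)
  constructor
  · rintro ⟨horth, hspan⟩ t
    let b : HilbertBasis S ℂ (Lp ℂ 2 μ) := HilbertBasis.mk horth (by rw [hspan])
    have hb : ⇑b = e := HilbertBasis.coe_mk _ _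
    have hx : ∀ x : Lp ℂ 2 μ, ∑' γ : S, ‖⟪e γ, x⟫_ℂ‖ ^ 2 = ‖x‖ ^ 2 := by
      intro x
      have h1 := lp.norm_rpow_eq_tsum (p := 2) (by norm_num) (b.repr x)
      have h2 : ‖b.repr x‖ = ‖x‖ := b.repr.norm_map x
      have h3 : ∀ γ : S, b.repr x γ = ⟪e γ, x⟫_ℂ := by
        intro γ
        rw [HilbertBasis.repr_apply_apply, hb]
      rw [h2] at h1
      have h4 : ((2 : ℝ≥0∞)).toReal = (2 : ℝ) := by norm_num
      rw [h4] at h1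
      simp only [Real.rpow_two] at h1
      have h5 : ∑' γ : S, ‖⟪e γ, x⟫_ℂ‖ ^ 2 = ∑' γ : S, ‖b.repr x γ‖ ^ 2 :=
        tsum_congr fun γ => by rw [h3]
      rw [h5, ← h1]
    have hfx := hx (fLp μ (-t))
    rw [norm_eq_one (fLp μ (-t)) (-t) (fLp_coe μ (-t)), one_pow] at hfx
    rw [← hfx]
    exact tsum_congr fun γ => by rw [key γ t]
  · intro hc
    have horth : Orthonormal ℂ e := by
      rw [orthonormal_iff_ite]
      intro γ₀ γ₁
      by_cases hEq : γ₀ = γ₁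
      · subst hEq
        rw [if_pos rfl, hinner_ee, sub_self, int_Fc_zero]
      · rw [if_neg hEq, hinner_ee]
        have h0 := hc (-(γ₀ : ℝ))
        simp only [Complex.ofReal_neg] at h0
        have hterm2 : ∀ γ : S, ‖∫ x, Complex.exp (2 * π * Complex.I * ((γ : ℝ) + -(γ₀ : ℝ)) * x) ∂μ‖ ^ 2
            = ‖∫ x, Fc ((γ : ℝ) - (γ₀ : ℝ)) x ∂μ‖ ^ 2 := by
          intro γ
          have h := hterm γ (-(γ₀ : ℝ))
          simp only [Complex.ofReal_neg] at h
          rw [h, sub_eq_add_neg]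
        have hsummable : Summable (fun γ : S =>
            ‖∫ x, Complex.exp (2 * π * Complex.I * ((γ : ℝ) + -(γ₀ : ℝ)) * x) ∂μ‖ ^ 2) := by
          by_contra hns
          rw [tsum_eq_zero_of_not_summable hns] at h0
          norm_num at h0
        have hγ₀ : ‖∫ x, Complex.exp (2 * π * Complex.I * ((γ₀ : ℝ) + -(γ₀ : ℝ)) * x) ∂μ‖ ^ 2 = 1 := by
          rw [hterm2 γ₀, sub_self, int_Fc_zero]
          norm_num
        have hpair : ∑ γ ∈ ({γ₀, γ₁} : Finset S),
            ‖∫ x, Complex.exp (2 * π * Complex.I * ((γ : ℝ) + -(γ₀ : ℝ)) * x) ∂μ‖ ^ 2 ≤ 1 := by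
          rw [← h0]
          exact hsummable.sum_le_tsum _ (fun i _ => by positivity)
        rw [Finset.sum_pair hEq, hγ₀] at hpair
        have hγ₁ : ‖∫ x, Complex.exp (2 * π * Complex.I * ((γ₁ : ℝ) + -(γ₀ : ℝ)) * x) ∂μ‖ ^ 2 = 0 := by
          have hnn : (0:ℝ) ≤ ‖∫ x, Complex.exp (2 * π * Complex.I * ((γ₁ : ℝ) + -(γ₀ : ℝ)) * x) ∂μ‖ ^ 2 := by positivity
          linarith
        rw [hterm2 γ₁] at hγ₁
        have := pow_eq_zero_iff (n := 2) (by norm_num) |>.mp hγ₁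
        rwa [norm_eq_zero] at this
    refine ⟨horth, ?_⟩
    rw [eq_top_iff, ← dense_fLp μ hK]
    refine Submodule.topologicalClosure_minimal _ ?_ (Submodule.isClosed_topologicalClosure _)
    rw [Submodule.span_le]
    rintro _ ⟨t, rfl⟩
    refine mem_closure_span_of_tsum_eq horth (fLp μ t) ?_
    rw [norm_eq_one (fLp μ t) t (fLp_coe μ t), one_pow]
    have h0 := hc (-t)
    rw [← h0]
    refine tsum_congr fun γ => ?_
    have := key γ (-t)
    rw [neg_neg] at this
    rw [this]
end Main
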